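/- Let A be an associative unital ℂ-algebra, q ∈ ℂ nonzero with q² ≠ 1, z ∈ ℂ nonzero, and u, v ∈ A invertible with u·v = q²·v·u. Define K = z·u⁻¹ (so K⁻¹ = z⁻¹·u), E = (q − q⁻¹)⁻¹·v⁻¹·(1 − u⁻¹), F = q(q − q⁻¹)⁻¹·v·(z·1 − z⁻¹·u). Then the Casimir element satisfies q·K + q⁻¹·K⁻¹ + (q − q⁻¹)²·F·E = (q·z + q⁻¹·z⁻¹)·1, i.e. the image of the Casimir under the free field homomorphism is the scalar q·z + q⁻¹·z⁻¹. -/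

import Mathlib

/-- The image of the Casimir element of `U_q(sl(2))` under the free field
homomorphism into the quantum torus is the scalar `q·z + q⁻¹·z⁻¹`. -/
theorem casimir_free_field_realization
    (A : Type*) [Ring A] [Algebra ℂ A]
    (q z : ℂ) (hq : q ≠ 0) (hq2 : q ^ 2 ≠ 1) (hz : z ≠ 0)
    (u v : Aˣ) (huv : (u : A) * (v : A) = q ^ 2 • ((v : A) * (u : A))) :
    let K : A := z • (↑u⁻¹ : A)
    let K' : A := z⁻¹ • (u : A)
    let E : A := (q - q⁻¹)⁻¹ • ((↑v⁻¹ : A) * (1 - (↑u⁻¹ : A)))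
    let F : A := (q * (q - q⁻¹)⁻¹) • ((v : A) * (z • (1 : A) - z⁻¹ • (u : A)))
    q • K + q⁻¹ • K' + (q - q⁻¹) ^ 2 • (F * E) = (q * z + q⁻¹ * z⁻¹) • (1 : A) := by
  intro K K' E F
  have hq2' : (q : ℂ) ^ 2 ≠ 0 := pow_ne_zero 2 hq
  have ha : q - q⁻¹ ≠ 0 := by
    intro h
    apply hq2
    have h' : q = q⁻¹ := sub_eq_zero.mp h
    field_simp at h'
    exact h'
  have hvu : (v : A) * (u : A) = (q ^ 2)⁻¹ • ((u : A) * (v : A)) := by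
    rw [huv, smul_smul, inv_mul_cancel₀ hq2', one_smul]
  have hvuv : ∀ x : A, (v : A) * ((u : A) * ((↑v⁻¹ : A) * x))
      = (q ^ 2)⁻¹ • ((u : A) * x) := by
    intro x
    rw [← mul_assoc, ← mul_assoc, hvu, smul_mul_assoc, smul_mul_assoc,
      mul_assoc ((u:A) * v), mul_assoc, Units.mul_inv_cancel_left]
  have hvuv1 : (v : A) * ((u : A) * (↑v⁻¹ : A)) = (q ^ 2)⁻¹ • (u : A) := by
    have := hvuv 1
    simpa using this
  have hFE : (q - q⁻¹) ^ 2 • (F * E)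
      = q • (((v : A) * (z • (1 : A) - z⁻¹ • (u : A))) *
        ((↑v⁻¹ : A) * (1 - (↑u⁻¹ : A)))) := by
    show (q - q⁻¹) ^ 2 •
        (((q * (q - q⁻¹)⁻¹) • ((v : A) * (z • (1 : A) - z⁻¹ • (u : A)))) *
         ((q - q⁻¹)⁻¹ • ((↑v⁻¹ : A) * (1 - (↑u⁻¹ : A))))) = _
    rw [smul_mul_assoc, mul_smul_comm, smul_smul, smul_smul]
    congr 1
    have : (q - q⁻¹) ^ 2 * (q * (q - q⁻¹)⁻¹) * (q - q⁻¹)⁻¹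
        = q * ((q - q⁻¹) * (q - q⁻¹)⁻¹) * ((q - q⁻¹) * (q - q⁻¹)⁻¹) := by ring
    rw [this, mul_inv_cancel₀ ha, mul_one, mul_one]
  rw [hFE]
  simp only [K, K', mul_sub, sub_mul, smul_sub, sub_smul, smul_mul_assoc,
    mul_smul_comm, smul_smul, mul_one, one_mul, mul_assoc,
    Units.mul_inv_cancel_left, Units.inv_mul_cancel_left, hvuv, hvuv1,
    Units.mul_inv]
  match_scalars <;> field_simp <;> ring
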